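/- Let d be a positive integer, ρ ≥ 1, and Φ = Φ_{d,ρ} the unique positive root of ρ(x+1)^d = x^{d+1}. With μ̂ = dΦ/((d+1)(Φ+1)) and λ̂ = (1−μ̂)Φ^{d+1}/ρ, for all x, y ≥ 0 and every monomial f(t) = t^ν with 0 ≤ ν ≤ d: y·f(x+y) ≤ λ̂·y·f(y) + μ̂·x·f(x). -/

import Mathlib

/-- Tangent line inequality for `t ^ (n+1)` at `u`, valid for nonnegative reals. -/
lemma tangent_pow (n : ℕ) {u v : ℝ} (hu : 0 ≤ u) (hv : 0 ≤ v) :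
    u ^ (n + 1) + ((n : ℝ) + 1) * u ^ n * (v - u) ≤ v ^ (n + 1) := by
  rcases eq_or_lt_of_le hu with h | h
  · rw [← h]
    rcases Nat.eq_zero_or_pos n with hn | hn
    · subst hn; norm_num
    · have h1 : (0:ℝ) ^ n = 0 := zero_pow hn.ne'
      have h0 : (0:ℝ) ^ (n+1) = 0 := zero_pow (Nat.succ_ne_zero n)
      rw [h0, h1]
      simpa using pow_nonneg hv (n+1)
  · have hb : (-1 : ℝ) ≤ v / u := by
      have : (0:ℝ) ≤ v / u := div_nonneg hv h.le
      linarith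
    have hB := one_add_mul_sub_le_pow hb (n + 1)
    have hup : (0:ℝ) < u ^ (n+1) := pow_pos h _
    have h2 := mul_le_mul_of_nonneg_left hB hup.le
    have e1 : u ^ (n+1) * (v / u) ^ (n+1) = v ^ (n+1) := by
      rw [← mul_pow]
      field_simp
    have e2 : u ^ (n+1) * (1 + ((n:ℝ)+1) * (v / u - 1))
        = u ^ (n+1) + ((n : ℝ) + 1) * u ^ n * (v - u) := by
      have hne : u ≠ 0 := ne_of_gt h
      field_simp [pow_succ]
      ring
    push_cast at h2
    rw [e1, e2] at h2
    exact h2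

set_option maxHeartbeats 1000000 in
theorem smoothness_witness (d : ℕ) (hd : 0 < d) (ρ : ℝ) (hρ : 1 ≤ ρ)
    (Φ : ℝ) (hΦpos : 0 < Φ) (hΦ : ρ * (Φ + 1) ^ d = Φ ^ (d + 1)) :
    let μ := (d : ℝ) * Φ / (((d : ℝ) + 1) * (Φ + 1))
    let lam := (1 - μ) * Φ ^ (d + 1) / ρ
    ∀ ν : ℕ, ν ≤ d → ∀ x y : ℝ, 0 ≤ x → 0 ≤ y →
      y * (x + y) ^ ν ≤ lam * y * y ^ ν + μ * x * x ^ ν := by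
  intro μ lam ν hν x y hx hy
  have hμ : μ = (d : ℝ) * Φ / (((d : ℝ) + 1) * (Φ + 1)) := rfl
  have hlam0 : lam = (1 - μ) * Φ ^ (d + 1) / ρ := rfl
  clear_value lam μ
  have hρ0 : (0:ℝ) < ρ := lt_of_lt_of_le one_pos hρ
  have hΦ1 : (1:ℝ) < Φ := by
    by_contra hle
    push_neg at hle
    have h1 : (Φ+1)^d ≤ Φ^(d+1) := by
      calc (Φ+1)^d ≤ ρ * (Φ+1)^d := le_mul_of_one_le_left (by positivity) hρ
        _ = Φ^(d+1) := hΦ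
    have h2 : Φ^(d+1) ≤ 1 := pow_le_one₀ hΦpos.le hle
    have h3 : (1:ℝ) < (Φ+1)^d := one_lt_pow₀ (by linarith) hd.ne'
    linarith
  have hΦ1pos : (0:ℝ) < Φ + 1 := by linarith
  have hd1 : (0:ℝ) < (d:ℝ) + 1 := by positivity
  have hν1 : (0:ℝ) < (ν:ℝ) + 1 := by positivity
  have hνd : (ν:ℝ) ≤ (d:ℝ) := Nat.cast_le.mpr hν
  have hlam' : lam = (1 - μ) * (Φ + 1) ^ d := by
    rw [hlam0, ← hΦ]
    field_simp
  -- Step A : from the tangent inequality with u = x+y, v = (Φ+1) y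
  have stepA : ((ν:ℝ)+1)*(Φ+1)*(y*(x+y)^ν)
      ≤ (ν:ℝ)*(x+y)^(ν+1) + (Φ+1)^(ν+1)*y^(ν+1) := by
    have ht := tangent_pow ν (add_nonneg hx hy) (mul_nonneg hΦ1pos.le hy)
    rw [mul_pow] at ht
    have e'' : (x+y)^(ν+1) = (x+y)^ν*x + (x+y)^ν*y := by rw [pow_succ]; ring
    have e' : (ν:ℝ)*(x+y)^(ν+1) = (ν:ℝ)*((x+y)^ν*x) + (ν:ℝ)*((x+y)^ν*y) := by
      rw [e'']; ring
    linarith [ht]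
  -- Step B : convexity of t ^ (ν+1)
  have stepB : (x+y)^(ν+1)
      ≤ (Φ/(Φ+1))*((Φ+1)/Φ*x)^(ν+1) + (1/(Φ+1))*((Φ+1)*y)^(ν+1) := by
    have hp : ((Φ+1)/Φ*x) ∈ Set.Ici (0:ℝ) := by
      have : 0 ≤ (Φ+1)/Φ*x := by positivity
      simpa using this
    have hq : ((Φ+1)*y) ∈ Set.Ici (0:ℝ) := by
      have : 0 ≤ (Φ+1)*y := by positivity
      simpa using this
    have ha : (0:ℝ) ≤ Φ/(Φ+1) := by positivity
    have hb : (0:ℝ) ≤ 1/(Φ+1) := by positivity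
    have hab : Φ/(Φ+1) + 1/(Φ+1) = 1 := by field_simp
    have hc := (convexOn_pow (ν+1)).2 hp hq ha hb hab
    simp only [smul_eq_mul] at hc
    have e : Φ/(Φ+1)*((Φ+1)/Φ*x) + 1/(Φ+1)*((Φ+1)*y) = x + y := by
      field_simp
    rwa [e] at hc
  -- combine A and B
  have key1 : ((ν:ℝ)+1)*(Φ+1)*(y*(x+y)^ν)
      ≤ (ν:ℝ)*((Φ+1)/Φ)^ν*x^(ν+1) + ((ν:ℝ)+Φ+1)*((Φ+1)^ν*y^(ν+1)) := by
    have hB' := mul_le_mul_of_nonneg_left stepB (Nat.cast_nonneg ν : (0:ℝ) ≤ ν)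
    have e2 : (Φ/(Φ+1))*((Φ+1)/Φ*x)^(ν+1) = ((Φ+1)/Φ)^ν * x^(ν+1) := by
      rw [mul_pow, pow_succ ((Φ+1)/Φ) ν, pow_succ x ν]
      field_simp
    have e3 : (1/(Φ+1))*((Φ+1)*y)^(ν+1) = (Φ+1)^ν * y^(ν+1) := by
      rw [mul_pow, pow_succ (Φ+1) ν]
      field_simp
    rw [e2, e3] at hB'
    have e4' : (Φ+1)^(ν+1)*y^(ν+1) = Φ*((Φ+1)^ν*y^(ν+1)) + (Φ+1)^ν*y^(ν+1) := by
      rw [pow_succ]; ring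
    linarith [stepA, hB']
  -- coefficient bound for x
  have key2 : (ν:ℝ)*((Φ+1)/Φ)^ν ≤ ((ν:ℝ)+1)*(Φ+1)*μ := by
    have hbase : (1:ℝ) ≤ (Φ+1)/Φ := by
      rw [le_div_iff₀ hΦpos]; linarith
    have h1 : ((Φ+1)/Φ)^ν ≤ ((Φ+1)/Φ)^d := pow_le_pow_right₀ hbase hν
    have h2 : ((Φ+1)/Φ)^d ≤ Φ := by
      rw [div_pow, div_le_iff₀ (pow_pos hΦpos d)]
      calc (Φ+1)^d = Φ^(d+1)/ρ := by
              rw [eq_div_iff hρ0.ne']; linarith [hΦ]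
        _ ≤ Φ^(d+1) := div_le_self (by positivity) hρ
        _ = Φ * Φ^d := by rw [pow_succ]; ring
    have h3 : (ν:ℝ)*((Φ+1)/Φ)^ν ≤ (ν:ℝ)*Φ :=
      mul_le_mul_of_nonneg_left (h1.trans h2) (Nat.cast_nonneg ν)
    have h4 : ((ν:ℝ)+1)*(Φ+1)*μ = ((ν:ℝ)+1)*(d:ℝ)*Φ/((d:ℝ)+1) := by
      rw [hμ]; field_simp
    rw [h4, le_div_iff₀ hd1]
    nlinarith [mul_nonneg (sub_nonneg.mpr hνd) hΦpos.le, h3,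
      mul_nonneg (Nat.cast_nonneg ν : (0:ℝ) ≤ ν) hΦpos.le]
  -- coefficient bound for y
  have key3 : ((ν:ℝ)+Φ+1)*(Φ+1)^ν ≤ ((ν:ℝ)+1)*(Φ+1)*lam := by
    obtain ⟨k, hk⟩ : ∃ k, d = ν + k := ⟨d - ν, (Nat.add_sub_cancel' hν).symm⟩
    have hkc : (d:ℝ) = (ν:ℝ) + (k:ℝ) := by exact_mod_cast congrArg (Nat.cast : ℕ → ℝ) hk
    have hk2 : ((k:ℝ)+1) ≤ (Φ+1)^k := by
      have hn : k + 1 ≤ 2^k := Nat.lt_two_pow_self (n := k)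
      calc ((k:ℝ)+1) ≤ (2:ℝ)^k := by exact_mod_cast hn
        _ ≤ (Φ+1)^k := pow_le_pow_left₀ (by norm_num) (by linarith) k
    have e1 : ((ν:ℝ)+1)*(Φ+1)*lam = ((ν:ℝ)+1)*(Φ+(d:ℝ)+1)*(Φ+1)^d/((d:ℝ)+1) := by
      rw [hlam', hμ]
      field_simp
      ring
    rw [e1, le_div_iff₀ hd1]
    have epow : (Φ+1:ℝ)^d = (Φ+1)^ν*(Φ+1)^k := by rw [hk, pow_add]
    rw [epow, hkc]
    have hpν : (0:ℝ) ≤ (Φ+1)^ν := by positivity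
    have hnn : (0:ℝ) ≤ (ν:ℝ) := Nat.cast_nonneg ν
    have hkn : (0:ℝ) ≤ (k:ℝ) := Nat.cast_nonneg k
    have scalar : ((ν:ℝ)+Φ+1)*((ν:ℝ)+(k:ℝ)+1)
        ≤ ((ν:ℝ)+1)*(Φ+((ν:ℝ)+(k:ℝ))+1)*(Φ+1)^k := by
      have step1 : ((ν:ℝ)+Φ+1)*((ν:ℝ)+(k:ℝ)+1)
          ≤ ((ν:ℝ)+1)*((k:ℝ)+1)*(Φ+((ν:ℝ)+(k:ℝ))+1) := by
        nlinarith [mul_nonneg (mul_nonneg hnn hkn) hΦpos.le,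
          mul_nonneg hkn (mul_nonneg (by linarith : (0:ℝ) ≤ (ν:ℝ)+1)
            (by linarith : (0:ℝ) ≤ (ν:ℝ)+(k:ℝ)+1))]
      have hpos : (0:ℝ) ≤ ((ν:ℝ)+1)*(Φ+((ν:ℝ)+(k:ℝ))+1) := by positivity
      have step2 := mul_le_mul_of_nonneg_left hk2 hpos
      linarith [step1, step2]
    have final := mul_le_mul_of_nonneg_right scalar hpν
    linarith [final]
  -- final assembly
  have hXp : (0:ℝ) ≤ x^(ν+1) := by positivity
  have hYp : (0:ℝ) ≤ y^(ν+1) := by positivity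
  have t2 := mul_le_mul_of_nonneg_right key2 hXp
  have t3 := mul_le_mul_of_nonneg_right key3 hYp
  have hfin : ((ν:ℝ)+1)*(Φ+1)*(y*(x+y)^ν)
      ≤ ((ν:ℝ)+1)*(Φ+1)*(lam*y*y^ν + μ*x*x^ν) := by
    have ex : x*x^ν = x^(ν+1) := by rw [pow_succ]; ring
    have ey : y*y^ν = y^(ν+1) := by rw [pow_succ]; ring
    have elam : ((ν:ℝ)+1)*(Φ+1)*(lam*y*y^ν + μ*x*x^ν)
        = (((ν:ℝ)+1)*(Φ+1)*lam)*y^(ν+1) + (((ν:ℝ)+1)*(Φ+1)*μ)*x^(ν+1) := by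
      rw [← ex, ← ey]; ring
    rw [elam]
    linarith [key1, t2, t3]
  have hpos : (0:ℝ) < ((ν:ℝ)+1)*(Φ+1) := by positivity
  have := le_of_mul_le_mul_left (by
    calc ((ν:ℝ)+1)*(Φ+1) * (y*(x+y)^ν) = ((ν:ℝ)+1)*(Φ+1)*(y*(x+y)^ν) := by ring
      _ ≤ ((ν:ℝ)+1)*(Φ+1)*(lam*y*y^ν + μ*x*x^ν) := hfin
      _ = ((ν:ℝ)+1)*(Φ+1) * (lam*y*y^ν + μ*x*x^ν) := by ring) hpos
  linarith [this]
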